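/- For the PCA on the N-cycle with irreducible local transition matrix T of period d, every configuration in S := C_0^{⊗N} ∪ ... ∪ C_{d-1}^{⊗N} is a periodic state of the global Markov chain with period exactly d, where C_0,...,C_{d-1} are the cyclic classes of T. -/

import Mathlib

open Matrix Finset MeasureTheory

/-- A row-stochastic matrix: nonnegative entries, each row sums to 1. -/
def RowStochastic {S : Type*} [Fintype S] (T : Matrix S S ℝ) : Prop :=
  (∀ j k, 0 ≤ T j k) ∧ ∀ j, ∑ k, T j k = 1

/-- Irreducibility of a nonnegative matrix: every state reaches every state. -/
def MatIrreducible {S : Type*} [Fintype S] [DecidableEq S] (T : Matrix S S ℝ) : Prop :=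
  ∀ i j, ∃ t : ℕ, 0 < (T ^ t) i j

/-- `d` is the period of state `i`: the gcd of the set of positive return times. -/
def IsGcdPeriod {S : Type*} [Fintype S] [DecidableEq S] (T : Matrix S S ℝ) (i : S) (d : ℕ) : Prop :=
  (∀ m : ℕ, 0 < m → 0 < (T ^ m) i i → d ∣ m) ∧
    ∀ e : ℕ, (∀ m : ℕ, 0 < m → 0 < (T ^ m) i i → e ∣ m) → e ∣ d

/-- The neighborhood of node `n` on the `N`-cycle: all nodes within cyclic distance `nv`. -/
def nbhd (N nv : ℕ) (n : Fin N) : Finset (Fin N) :=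
  Finset.univ.filter fun i => (n.val + N - i.val) % N ≤ nv ∨ (i.val + N - n.val) % N ≤ nv

/-- The PCA global transition matrix on configurations. -/
noncomputable def pcaP (N K nv : ℕ) (T : Matrix (Fin K) (Fin K) ℝ) :
    Matrix (Fin N → Fin K) (Fin N → Fin K) ℝ :=
  Matrix.of fun x y =>
    ∏ n : Fin N, (((nbhd N nv n).card : ℝ)⁻¹ * ∑ i ∈ nbhd N nv n, T (x i) (y n))

/-- Cyclic class decomposition of `[K]` for `T` with period `d`. -/
def CyclicClasses {K : ℕ} (T : Matrix (Fin K) (Fin K) ℝ) (d : ℕ)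
    (C : ℕ → Finset (Fin K)) : Prop :=
  (∀ r, C (r + d) = C r) ∧ (∀ k : Fin K, ∃! r : ℕ, r < d ∧ k ∈ C r) ∧
    ∀ j k, 0 < T j k → ∃ r, j ∈ C r ∧ k ∈ C (r + 1)


lemma addMulMem (S : Set ℕ) (hS : ∀ a ∈ S, ∀ b ∈ S, a + b ∈ S) {x : ℕ} (hx : x ∈ S) :
    ∀ n, 0 < n → n * x ∈ S := by
  intro n hn
  induction n with
  | zero => omega
  | succ n ih =>
    rcases Nat.eq_zero_or_pos n with h | h
    · simpa [h]
    · have := hS _ (ih h) _ hx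
      simpa [Nat.succ_mul] using this

lemma pair_lemma (S : Set ℕ) (hS : ∀ a ∈ S, ∀ b ∈ S, a + b ∈ S) {a b : ℕ}
    (ha : a ∈ S) (hb : b ∈ S) (ha0 : 0 < a) (hb0 : 0 < b) {m : ℕ}
    (hd : Nat.gcd a b ∣ m) (hm : a * b ≤ m) : m ∈ S := by
  set g := Nat.gcd a b with hg
  have hgpos : 0 < g := Nat.gcd_pos_of_pos_left _ ha0
  obtain ⟨q, hq⟩ := hd
  set a' := a / g with ha'
  set b' := b / g with hb'
  have hag : a = g * a' := (Nat.mul_div_cancel' (Nat.gcd_dvd_left a b)).symm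
  have hbg : b = g * b' := (Nat.mul_div_cancel' (Nat.gcd_dvd_right a b)).symm
  have hb'0 : 0 < b' := Nat.div_pos (Nat.le_of_dvd hb0 (Nat.gcd_dvd_right a b)) hgpos
  have hb'le : b' ≤ b := Nat.div_le_self _ _
  set X := Nat.gcdA a b with hX
  set Y := Nat.gcdB a b with hY
  have hbez : (g : ℤ) = a * X + b * Y := Nat.gcd_eq_gcd_ab a b
  set s : ℤ := (X * q) / (b' : ℤ) with hs
  set Kk : ℤ := (X * q) % (b' : ℤ) with hKk
  have hK : (b' : ℤ) * s + Kk = X * q := Int.mul_ediv_add_emod _ _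
  have hK0 : 0 ≤ Kk := Int.emod_nonneg _ (by exact_mod_cast hb'0.ne')
  have hKlt : Kk < (b' : ℤ) := Int.emod_lt_of_pos _ (by exact_mod_cast hb'0)
  set t : ℤ := Y * q + a' * s with ht
  clear_value X Y s Kk t
  have hqZ : (m : ℤ) = g * q := by exact_mod_cast hq
  have hagZ : (a : ℤ) = g * a' := by exact_mod_cast hag
  have hbgZ : (b : ℤ) = g * b' := by exact_mod_cast hbg
  have key : (m : ℤ) = a * Kk + b * t := by
    rw [ht]
    linear_combination hqZ + q * hbez - (a : ℤ) * hK + (b' * s) * hagZ - (a' * s) * hbgZ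
  have hbt : 0 < (b : ℤ) * t := by
    have ha0' : (0:ℤ) ≤ a := by positivity
    have h1 : (a : ℤ) * Kk ≤ a * ((b':ℤ) - 1) :=
      mul_le_mul_of_nonneg_left (by omega) ha0'
    have h2 : (a : ℤ) * b ≤ m := by exact_mod_cast hm
    have h3 : (a : ℤ) * b' ≤ a * b :=
      mul_le_mul_of_nonneg_left (by exact_mod_cast hb'le) ha0'
    have ha0Z : (0:ℤ) < a := by exact_mod_cast ha0
    have e1 : (b:ℤ) * t = m - a * Kk := by linarith [key]
    rw [e1]
    have h1' : (a : ℤ) * Kk ≤ a * b' - a := by linarith [mul_sub (a:ℤ) (b':ℤ) 1]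
    linarith
  have htpos : 0 < t := by
    rcases mul_pos_iff.mp hbt with ⟨_, h⟩ | ⟨h, _⟩
    · exact h
    · exfalso; have : (0:ℤ) < b := by exact_mod_cast hb0
      omega
  set k := Kk.toNat with hk
  set tn := t.toNat with htn
  have hkZ : (k : ℤ) = Kk := Int.toNat_of_nonneg hK0
  have htnZ : (tn : ℤ) = t := Int.toNat_of_nonneg htpos.le
  clear_value k tn
  have hmn : m = a * k + b * tn := by
    have : (m : ℤ) = (a * k + b * tn : ℕ) := by push_cast [hkZ, htnZ]; linarith [key]
    exact_mod_cast this
  have htn1 : 0 < tn := by omega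
  have hbtn : b * tn ∈ S := by
    have := addMulMem S hS hb tn htn1
    simpa [Nat.mul_comm] using this
  rcases Nat.eq_zero_or_pos k with hk0 | hk0
  · rw [hmn, hk0]; simpa using hbtn
  · have hak : a * k ∈ S := by
      have := addMulMem S hS ha k hk0
      simpa [Nat.mul_comm] using this
    rw [hmn]; exact hS _ hak _ hbtn

lemma eventual (S : Set ℕ) (hS : ∀ a ∈ S, ∀ b ∈ S, a + b ∈ S)
    {s₀ : ℕ} (hs₀ : s₀ ∈ S) (hs₀0 : 0 < s₀) {d : ℕ}
    (hd1 : ∀ m ∈ S, d ∣ m) (hd2 : ∀ e : ℕ, (∀ m ∈ S, e ∣ m) → e ∣ d) :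
    ∃ M, ∀ q, M ≤ q → d * q ∈ S := by
  set G : Set ℕ := {g | 0 < g ∧ ∃ M, ∀ q, M ≤ q → g * q ∈ S} with hG
  have hne : G.Nonempty := by
    refine ⟨s₀, hs₀0, 1, fun q hq => ?_⟩
    have := addMulMem S hS hs₀ q hq
    simpa [Nat.mul_comm] using this
  obtain ⟨hg0, M, hM⟩ : sInf G ∈ G := Nat.sInf_mem hne
  set g := sInf G with hgdef
  have hgdvd : ∀ m ∈ S, g ∣ m := by
    intro m hm
    rcases Nat.eq_zero_or_pos m with hm0 | hm0
    · simp [hm0]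
    set q := 1 + m * M with hqdef
    have hqM : M ≤ q := le_trans (Nat.le_mul_of_pos_left M hm0) (by omega)
    have ha : g * q ∈ S := hM q hqM
    have hgcd : Nat.gcd (g * q) m = Nat.gcd g m := by
      have he : g * q = g + g * M * m := by ring
      rw [he]
      exact Nat.gcd_add_mul_right_left m g (g * M)
    have hmemG : Nat.gcd g m ∈ G := by
      refine ⟨Nat.gcd_pos_of_pos_left _ hg0, g * q * m, fun p hp => ?_⟩
      refine pair_lemma S hS ha hm (by positivity) hm0 ?_ ?_
      · rw [hgcd]; exact dvd_mul_right _ _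
      · calc g * q * m ≤ p := hp
          _ ≤ Nat.gcd g m * p := Nat.le_mul_of_pos_left p (Nat.gcd_pos_of_pos_left _ hg0)
    have hle : g ≤ Nat.gcd g m := Nat.sInf_le hmemG
    have heq : Nat.gcd g m = g :=
      le_antisymm (Nat.le_of_dvd hg0 (Nat.gcd_dvd_left g m)) hle
    exact heq ▸ Nat.gcd_dvd_right g m
  have hgd : g ∣ d := hd2 g hgdvd
  have hdg : d ∣ g := by
    have h1 : d ∣ g * (M + 1) := hd1 _ (hM _ (by omega))
    have h2 : d ∣ g * (M + 2) := hd1 _ (hM _ (by omega))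
    have hsub := Nat.dvd_sub h2 h1
    have he : g * (M + 2) - g * (M + 1) = g := by
      have : g * (M + 2) = g * (M + 1) + g := by ring
      omega
    rwa [he] at hsub
  obtain rfl : d = g := Nat.dvd_antisymm hdg hgd
  exact ⟨M, hM⟩

section pca

variable {K N nv : ℕ} {T : Matrix (Fin K) (Fin K) ℝ}

lemma Tpow_nonneg (hT0 : ∀ j k, 0 ≤ T j k) : ∀ (m : ℕ) (j k), 0 ≤ (T ^ m) j k := by
  intro m
  induction m with
  | zero =>
    intro j k
    by_cases h : j = k <;> simp [Matrix.one_apply, h]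
  | succ m ih =>
    intro j k
    rw [pow_succ, Matrix.mul_apply]
    exact Finset.sum_nonneg fun u _ => mul_nonneg (ih j u) (hT0 u k)

lemma self_mem_nbhd (n : Fin N) : n ∈ nbhd N nv n := by
  have hN : 0 < N := n.pos
  simp only [nbhd, Finset.mem_filter, Finset.mem_univ, true_and]
  left
  have h : n.val + N - n.val = N := by omega
  rw [h, Nat.mod_self]
  exact Nat.zero_le _

lemma nbhd_card_pos (n : Fin N) : 0 < (nbhd N nv n).card :=
  Finset.card_pos.mpr ⟨n, self_mem_nbhd n⟩

lemma pca_entry_nonneg (hT0 : ∀ j k, 0 ≤ T j k) (x y : Fin N → Fin K) :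
    0 ≤ pcaP N K nv T x y := by
  rw [pcaP, Matrix.of_apply]
  refine Finset.prod_nonneg fun n _ => mul_nonneg (inv_nonneg.mpr (by positivity))
    (Finset.sum_nonneg fun i _ => hT0 _ _)

lemma pca_pow_nonneg (hT0 : ∀ j k, 0 ≤ T j k) :
    ∀ (m : ℕ) (x y : Fin N → Fin K), 0 ≤ ((pcaP N K nv T) ^ m) x y := by
  intro m
  induction m with
  | zero =>
    intro x y
    by_cases h : x = y <;> simp [Matrix.one_apply, h]
  | succ m ih =>
    intro x y
    rw [pow_succ, Matrix.mul_apply]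
    exact Finset.sum_nonneg fun u _ => mul_nonneg (ih x u) (pca_entry_nonneg hT0 u y)

lemma exists_pos_of_mul_pos {α : Type*} [Fintype α] {A B : Matrix α α ℝ}
    (hA : ∀ i j, 0 ≤ A i j) {x z : α} (h : 0 < (A * B) x z) :
    ∃ y, 0 < A x y ∧ 0 < B y z := by
  rw [Matrix.mul_apply] at h
  have h0 : ∑ y : α, (0:ℝ) < ∑ y : α, A x y * B y z := by simpa using h
  obtain ⟨y, -, hy⟩ := Finset.exists_lt_of_sum_lt h0
  rcases mul_pos_iff.mp hy with ⟨h1, h2⟩ | ⟨h1, _⟩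
  · exact ⟨y, h1, h2⟩
  · exact absurd h1 (not_lt.mpr (hA x y))

end pca

section classes

variable {K N nv d : ℕ} {T : Matrix (Fin K) (Fin K) ℝ} {C : ℕ → Finset (Fin K)}

lemma C_add_mul (hCper : ∀ r, C (r + d) = C r) (q : ℕ) : ∀ s, C (s + d * q) = C s := by
  induction q with
  | zero => simp
  | succ q ih =>
    intro s
    have h : s + d * (q + 1) = (s + d * q) + d := by ring
    rw [h, hCper, ih]

lemma C_mod (hCper : ∀ r, C (r + d) = C r) (s : ℕ) : C s = C (s % d) := by
  conv_lhs => rw [← Nat.mod_add_div s d]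
  exact C_add_mul hCper (s / d) (s % d)

lemma mem_C_mod_eq (hd : 0 < d) (hCper : ∀ r, C (r + d) = C r)
    (hCuniq : ∀ k : Fin K, ∃! r : ℕ, r < d ∧ k ∈ C r)
    {j : Fin K} {a b : ℕ} (haj : j ∈ C a) (hbj : j ∈ C b) : a % d = b % d := by
  obtain ⟨r0, -, huniq⟩ := hCuniq j
  have h1 : a % d = r0 := huniq _ ⟨Nat.mod_lt _ hd, by rw [← C_mod hCper]; exact haj⟩
  have h2 : b % d = r0 := huniq _ ⟨Nat.mod_lt _ hd, by rw [← C_mod hCper]; exact hbj⟩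
  rw [h1, h2]

lemma pca_step (hd : 0 < d) (hT0 : ∀ j k, 0 ≤ T j k) (hC : CyclicClasses T d C)
    {s : ℕ} {z y : Fin N → Fin K} (hz : ∀ n, z n ∈ C s)
    (h : 0 < pcaP N K nv T z y) : ∀ n, y n ∈ C (s + 1) := by
  obtain ⟨hCper, hCuniq, hCstep⟩ := hC
  intro n
  rw [pcaP, Matrix.of_apply] at h
  have hfac : 0 < ((nbhd N nv n).card : ℝ)⁻¹ * ∑ i ∈ nbhd N nv n, T (z i) (y n) := by
    by_contra hcon
    push_neg at hcon
    have h0 : (((nbhd N nv n).card : ℝ)⁻¹ * ∑ i ∈ nbhd N nv n, T (z i) (y n)) = 0 :=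
      le_antisymm hcon (mul_nonneg (inv_nonneg.mpr (by positivity))
        (Finset.sum_nonneg fun i _ => hT0 _ _))
    rw [Finset.prod_eq_zero (Finset.mem_univ n) h0] at h
    exact lt_irrefl _ h
  have hsum : 0 < ∑ i ∈ nbhd N nv n, T (z i) (y n) := by
    rcases mul_pos_iff.mp hfac with ⟨-, h2⟩ | ⟨h1, -⟩
    · exact h2
    · exact absurd h1 (not_lt.mpr (inv_nonneg.mpr (by positivity)))
  have h0' : ∑ i ∈ nbhd N nv n, (0:ℝ) < ∑ i ∈ nbhd N nv n, T (z i) (y n) := by simpa using hsum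
  obtain ⟨i, -, hi⟩ := Finset.exists_lt_of_sum_lt h0'
  obtain ⟨s', hzs', hys'⟩ := hCstep _ _ hi
  have hmod : s' % d = s % d := mem_C_mod_eq hd hCper hCuniq hzs' (hz i)
  have hmod1 : (s' + 1) % d = (s + 1) % d := Nat.ModEq.add_right 1 hmod
  rw [C_mod hCper, ← hmod1, ← C_mod hCper]
  exact hys'

lemma pca_reach (hd : 0 < d) (hT0 : ∀ j k, 0 ≤ T j k) (hC : CyclicClasses T d C)
    {r : ℕ} {x : Fin N → Fin K} (hx : ∀ n, x n ∈ C r) :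
    ∀ (m : ℕ) (y : Fin N → Fin K), 0 < ((pcaP N K nv T) ^ m) x y → ∀ n, y n ∈ C (r + m) := by
  intro m
  induction m with
  | zero =>
    intro y h n
    rw [pow_zero] at h
    by_cases hxy : x = y
    · subst hxy; simpa using hx n
    · rw [Matrix.one_apply_ne hxy] at h; exact absurd h (lt_irrefl 0)
  | succ m ih =>
    intro y h n
    rw [pow_succ] at h
    obtain ⟨z, hz1, hz2⟩ := exists_pos_of_mul_pos (fun u v => pca_pow_nonneg hT0 m u v) h
    have hzC := ih z hz1
    have hstep := pca_step hd hT0 hC hzC hz2 n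
    have he : r + m + 1 = r + (m + 1) := by ring
    rwa [he] at hstep

lemma pca_single (hT0 : ∀ j k, 0 ≤ T j k) (y z : Fin N → Fin K) :
    (∏ n : Fin N, ((nbhd N nv n).card : ℝ)⁻¹) * ∏ n : Fin N, T (y n) (z n)
      ≤ pcaP N K nv T y z := by
  rw [pcaP, Matrix.of_apply, ← Finset.prod_mul_distrib]
  refine Finset.prod_le_prod (fun n _ => mul_nonneg (inv_nonneg.mpr (by positivity)) (hT0 _ _))
    (fun n _ => ?_)
  refine mul_le_mul_of_nonneg_left ?_ (inv_nonneg.mpr (by positivity))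
  exact Finset.single_le_sum (f := fun i => T (y i) (z n)) (fun i _ => hT0 _ _) (self_mem_nbhd n)

lemma pca_lower (hT0 : ∀ j k, 0 ≤ T j k) :
    ∀ (m : ℕ) (x y : Fin N → Fin K),
      (∏ n : Fin N, ((nbhd N nv n).card : ℝ)⁻¹) ^ m * ∏ n : Fin N, (T ^ m) (x n) (y n)
        ≤ ((pcaP N K nv T) ^ m) x y := by
  set c : ℝ := ∏ n : Fin N, ((nbhd N nv n).card : ℝ)⁻¹ with hc
  have hc0 : 0 ≤ c := Finset.prod_nonneg fun n _ => inv_nonneg.mpr (by positivity)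
  intro m
  induction m with
  | zero =>
    intro x y
    rw [pow_zero, pow_zero, pow_zero, one_mul]
    by_cases hxy : x = y
    · subst hxy
      simp [Matrix.one_apply_eq]
    · obtain ⟨n0, hn0⟩ : ∃ n, x n ≠ y n := by
        by_contra hcon; push_neg at hcon; exact hxy (funext hcon)
      rw [Matrix.one_apply_ne hxy]
      have hz : (∏ n : Fin N, (1 : Matrix (Fin K) (Fin K) ℝ) (x n) (y n)) = 0 :=
        Finset.prod_eq_zero (Finset.mem_univ n0) (Matrix.one_apply_ne hn0)
      rw [hz]
  | succ m ih =>
    intro x z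
    have hexp : ∏ n : Fin N, (T ^ (m + 1)) (x n) (z n)
        = ∑ y : Fin N → Fin K, ∏ n : Fin N, ((T ^ m) (x n) (y n) * T (y n) (z n)) := by
      simp only [pow_succ, Matrix.mul_apply]
      exact Fintype.prod_sum fun n k => (T ^ m) (x n) k * T k (z n)
    have hrhs : ((pcaP N K nv T) ^ (m + 1)) x z
        = ∑ y : Fin N → Fin K, ((pcaP N K nv T) ^ m) x y * pcaP N K nv T y z := by
      rw [pow_succ, Matrix.mul_apply]
    rw [hexp, hrhs, Finset.mul_sum]
    refine Finset.sum_le_sum fun y _ => ?_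
    have hterm : c ^ (m + 1) * ∏ n : Fin N, ((T ^ m) (x n) (y n) * T (y n) (z n))
        = (c ^ m * ∏ n : Fin N, (T ^ m) (x n) (y n)) * (c * ∏ n : Fin N, T (y n) (z n)) := by
      rw [Finset.prod_mul_distrib]; ring
    rw [hterm]
    refine mul_le_mul (ih x y) (pca_single hT0 y z)
      (mul_nonneg hc0 (Finset.prod_nonneg fun n _ => hT0 _ _))
      (pca_pow_nonneg hT0 m x y)

end classes

section tside

variable {K d : ℕ} {T : Matrix (Fin K) (Fin K) ℝ}

lemma T_return_add (hT0 : ∀ j k, 0 ≤ T j k) {j : Fin K} {a b : ℕ}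
    (ha : 0 < (T ^ a) j j) (hb : 0 < (T ^ b) j j) : 0 < (T ^ (a + b)) j j := by
  rw [pow_add, Matrix.mul_apply]
  refine lt_of_lt_of_le (mul_pos ha hb) ?_
  exact Finset.single_le_sum (f := fun u => (T ^ a) j u * (T ^ b) u j)
    (fun u _ => mul_nonneg (Tpow_nonneg hT0 a j u) (Tpow_nonneg hT0 b u j)) (Finset.mem_univ j)

lemma T_exists_return (hT : RowStochastic T) (hirr : MatIrreducible T) (j : Fin K) :
    ∃ m, 0 < m ∧ 0 < (T ^ m) j j := by
  have hlt : ∑ k : Fin K, (0:ℝ) < ∑ k : Fin K, T j k := by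
    rw [Finset.sum_const_zero, hT.2 j]; exact zero_lt_one
  obtain ⟨k, -, hk⟩ := Finset.exists_lt_of_sum_lt hlt
  obtain ⟨t, ht⟩ := hirr k j
  refine ⟨1 + t, by omega, ?_⟩
  rw [pow_add, pow_one, Matrix.mul_apply]
  refine lt_of_lt_of_le (mul_pos hk ht) ?_
  exact Finset.single_le_sum (f := fun u => T j u * (T ^ t) u j)
    (fun u _ => mul_nonneg (hT.1 _ _) (Tpow_nonneg hT.1 t u j)) (Finset.mem_univ k)

end tside

/-- For the PCA on the `N`-cycle with irreducible local transition matrix `T`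
of period `d` and cyclic classes `C`, every configuration all of whose coordinates lie in a
single class `C r` is a periodic state of the global chain with period exactly `d`. -/
theorem stmt_2 {K N nv d : ℕ} (hN : 0 < N) (T : Matrix (Fin K) (Fin K) ℝ)
    (hT : RowStochastic T) (hirr : MatIrreducible T) (hper : ∀ i, IsGcdPeriod T i d)
    (C : ℕ → Finset (Fin K)) (hC : CyclicClasses T d C)
    (r : ℕ) (x : Fin N → Fin K) (hx : ∀ n, x n ∈ C r) :
    IsGcdPeriod (pcaP N K nv T) x d := by
  obtain ⟨hT0, hTrow⟩ := hT
  have hCper := hC.1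
  have hCuniq := hC.2.1
  have hd : 0 < d := by
    obtain ⟨r0, ⟨hr0, -⟩, -⟩ := hCuniq (x ⟨0, hN⟩)
    omega
  constructor
  · intro m hm hmpos
    have hreach := pca_reach hd hT0 hC hx m x hmpos ⟨0, hN⟩
    have hmod : r % d = (r + m) % d := mem_C_mod_eq hd hCper hCuniq (hx ⟨0, hN⟩) hreach
    have hdvd : d ∣ (r + m - r) := (Nat.modEq_iff_dvd' (Nat.le_add_right r m)).mp hmod
    simpa using hdvd
  · intro e he
    have hMn : ∀ n : Fin N, ∃ M, ∀ q, M ≤ q → 0 < (T ^ (d * q)) (x n) (x n) := by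
      intro n
      set S : Set ℕ := {m | 0 < m ∧ 0 < (T ^ m) (x n) (x n)} with hSdef
      have hSadd : ∀ a ∈ S, ∀ b ∈ S, a + b ∈ S := fun a ha b hb =>
        ⟨Nat.add_pos_left ha.1 b, T_return_add hT0 ha.2 hb.2⟩
      obtain ⟨s₀, hs₀pos, hs₀⟩ := T_exists_return ⟨hT0, hTrow⟩ hirr (x n)
      obtain ⟨M, hM⟩ := eventual S hSadd (⟨hs₀pos, hs₀⟩ : s₀ ∈ S) hs₀pos
        (fun m hm => (hper (x n)).1 m hm.1 hm.2)
        (fun e' he' => (hper (x n)).2 e' (fun m h1 h2 => he' m ⟨h1, h2⟩))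
      exact ⟨M, fun q hq => (hM q hq).2⟩
    choose M hM using hMn
    set Ms := Finset.univ.sup M + 1 with hMs
    have hpos : ∀ q, Ms ≤ q → 0 < ((pcaP N K nv T) ^ (d * q)) x x := by
      intro q hq
      refine lt_of_lt_of_le ?_ (pca_lower hT0 (d * q) x x)
      have hc : 0 < (∏ n : Fin N, ((nbhd N nv n).card : ℝ)⁻¹) :=
        Finset.prod_pos fun n _ => inv_pos.mpr (by exact_mod_cast nbhd_card_pos n)
      have hp : 0 < ∏ n : Fin N, (T ^ (d * q)) (x n) (x n) := by
        refine Finset.prod_pos fun n _ => hM n q ?_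
        have hsup : M n ≤ Finset.univ.sup M := Finset.le_sup (Finset.mem_univ n)
        omega
      exact mul_pos (pow_pos hc _) hp
    have h1 : e ∣ d * Ms := he _ (Nat.mul_pos hd (by omega)) (hpos Ms le_rfl)
    have h2 : e ∣ d * (Ms + 1) := he _ (Nat.mul_pos hd (by omega)) (hpos (Ms + 1) (by omega))
    have hsub := Nat.dvd_sub h2 h1
    have he2 : d * (Ms + 1) - d * Ms = d := by
      have : d * (Ms + 1) = d * Ms + d := by ring
      omega
    rwa [he2] at hsub
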